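/- Let V be a finite node set, E ⊆ V × V a set of directed edges, and w, w' : E → ℝ with w(e), w'(e) ∈ [0,1] for all e ∈ E. Then for every seed set S ⊆ V and every node u ∈ V, |F^w_u(S) − F^{w'}_u(S)| ≤ Σ_{e ∈ E} |w(e) − w'(e)|; that is, the live-edge DIC influence is 1-Lipschitz in the edge weights with respect to the L1 norm. -/

import Mathlib

open Classical

variable {V : Type*} [DecidableEq V]

/-- `u` is `H`-reachable from `S`: `u ∈ S` or a directed path of edges of `H` leads
from some node of `S` to `u`. -/
def dicReach (H : Finset (V × V)) (S : Finset V) (u : V) : Prop :=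
  ∃ s ∈ S, Relation.ReflTransGen (fun a b => (a, b) ∈ H) s u

open Classical in
/-- The live-edge DIC influence
`F^w_u(S) = Σ_{H ⊆ E} (Π_{e ∈ H} w(e)) (Π_{e ∈ E∖H} (1 − w(e))) · 1[u is H-reachable from S]`. -/
noncomputable def dicInf (E : Finset (V × V)) (w : V × V → ℝ) (S : Finset V) (u : V) : ℝ :=
  ∑ H ∈ E.powerset,
    (∏ e ∈ H, w e) * (∏ e ∈ E \ H, (1 - w e)) * (if dicReach H S u then 1 else 0)

lemma sum_prob_one (s : Finset (V × V)) (v : V × V → ℝ) :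
    ∑ H ∈ s.powerset, (∏ e ∈ H, v e) * ∏ e ∈ s \ H, (1 - v e) = 1 := by
  rw [← Finset.prod_add]
  simp

lemma split_powerset (a : V × V) (s : Finset (V × V)) (ha : a ∉ s) (v : V × V → ℝ)
    (f : Finset (V × V) → ℝ) :
    ∑ H ∈ (insert a s).powerset,
        (∏ e ∈ H, v e) * (∏ e ∈ insert a s \ H, (1 - v e)) * f H
    = ∑ H ∈ s.powerset, (∏ e ∈ H, v e) * (∏ e ∈ s \ H, (1 - v e)) *
        ((1 - v a) * f H + v a * f (insert a H)) := by
  rw [Finset.sum_powerset_insert ha, ← Finset.sum_add_distrib]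
  apply Finset.sum_congr rfl
  intro H hH
  have hHs := Finset.mem_powerset.mp hH
  have haH : a ∉ H := fun h => ha (hHs h)
  have h1 : insert a s \ H = insert a (s \ H) := by
    ext x
    simp only [Finset.mem_sdiff, Finset.mem_insert]
    constructor
    · rintro ⟨h | h, hx⟩ <;> tauto
    · rintro (rfl | ⟨hx, hxH⟩)
      · exact ⟨Or.inl rfl, haH⟩
      · exact ⟨Or.inr hx, hxH⟩
  have h2 : insert a s \ insert a H = s \ H := by
    ext x
    simp only [Finset.mem_sdiff, Finset.mem_insert]
    constructor
    · rintro ⟨h | h, hx⟩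
      · exact absurd (Or.inl h) hx
      · exact ⟨h, fun hxH => hx (Or.inr hxH)⟩
    · rintro ⟨hx, hxH⟩
      refine ⟨Or.inr hx, ?_⟩
      rintro (rfl | h)
      · exact ha hx
      · exact hxH h
  have haSH : a ∉ s \ H := fun h => ha (Finset.mem_sdiff.mp h).1
  rw [h1, h2, Finset.prod_insert haH, Finset.prod_insert haSH]
  ring

lemma dic_key (E : Finset (V × V)) :
    ∀ (w w' : V × V → ℝ), (∀ e ∈ E, w e ∈ Set.Icc (0 : ℝ) 1) →
      (∀ e ∈ E, w' e ∈ Set.Icc (0 : ℝ) 1) →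
      ∀ f : Finset (V × V) → ℝ, (∀ H, f H ∈ Set.Icc (0 : ℝ) 1) →
      |∑ H ∈ E.powerset, (∏ e ∈ H, w e) * (∏ e ∈ E \ H, (1 - w e)) * f H
        - ∑ H ∈ E.powerset, (∏ e ∈ H, w' e) * (∏ e ∈ E \ H, (1 - w' e)) * f H|
        ≤ ∑ e ∈ E, |w e - w' e| := by
  induction E using Finset.induction_on with
  | empty => intro w w' _ _ f hf; simp
  | insert _ _ ha ih =>
    rename_i a s
    intro w w' hw hw' f hf
    have hwa := hw a (Finset.mem_insert_self a s)
    have hw'a := hw' a (Finset.mem_insert_self a s)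
    set g : Finset (V × V) → ℝ := fun H => (1 - w a) * f H + w a * f (insert a H) with hg
    have hgI : ∀ H, g H ∈ Set.Icc (0 : ℝ) 1 := by
      intro H
      have h1 := hf H; have h2 := hf (insert a H)
      simp only [hg]
      constructor
      · nlinarith [h1.1, h2.1, hwa.1, hwa.2]
      · nlinarith [h1.2, h2.2, hwa.1, hwa.2]
    rw [split_powerset a s ha w f, split_powerset a s ha w' f]
    have hws : ∀ e ∈ s, w e ∈ Set.Icc (0 : ℝ) 1 :=
      fun e he => hw e (Finset.mem_insert_of_mem he)
    have hw's : ∀ e ∈ s, w' e ∈ Set.Icc (0 : ℝ) 1 :=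
      fun e he => hw' e (Finset.mem_insert_of_mem he)
    have hP : ∀ H ∈ s.powerset, 0 ≤ (∏ e ∈ H, w' e) * ∏ e ∈ s \ H, (1 - w' e) := by
      intro H hH
      have hHs := Finset.mem_powerset.mp hH
      apply mul_nonneg
      · exact Finset.prod_nonneg fun e he => (hw's e (hHs he)).1
      · exact Finset.prod_nonneg fun e he =>
          sub_nonneg.mpr (hw's e (Finset.mem_sdiff.mp he).1).2
    have hmid : |∑ H ∈ s.powerset, (∏ e ∈ H, w' e) * (∏ e ∈ s \ H, (1 - w' e)) * g H
        - ∑ H ∈ s.powerset, (∏ e ∈ H, w' e) * (∏ e ∈ s \ H, (1 - w' e)) *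
          ((1 - w' a) * f H + w' a * f (insert a H))| ≤ |w a - w' a| := by
      rw [← Finset.sum_sub_distrib]
      calc |∑ H ∈ s.powerset, ((∏ e ∈ H, w' e) * (∏ e ∈ s \ H, (1 - w' e)) * g H
            - (∏ e ∈ H, w' e) * (∏ e ∈ s \ H, (1 - w' e)) *
              ((1 - w' a) * f H + w' a * f (insert a H)))|
          ≤ ∑ H ∈ s.powerset, |(∏ e ∈ H, w' e) * (∏ e ∈ s \ H, (1 - w' e)) * g H
            - (∏ e ∈ H, w' e) * (∏ e ∈ s \ H, (1 - w' e)) *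
              ((1 - w' a) * f H + w' a * f (insert a H))| := Finset.abs_sum_le_sum_abs _ _
        _ ≤ ∑ H ∈ s.powerset,
              (∏ e ∈ H, w' e) * (∏ e ∈ s \ H, (1 - w' e)) * |w a - w' a| := by
            apply Finset.sum_le_sum
            intro H hH
            have : (∏ e ∈ H, w' e) * (∏ e ∈ s \ H, (1 - w' e)) * g H
                - (∏ e ∈ H, w' e) * (∏ e ∈ s \ H, (1 - w' e)) *
                  ((1 - w' a) * f H + w' a * f (insert a H))
                = (∏ e ∈ H, w' e) * (∏ e ∈ s \ H, (1 - w' e)) *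
                  ((w a - w' a) * (f (insert a H) - f H)) := by
              simp only [hg]; ring
            rw [this, abs_mul, abs_of_nonneg (hP H hH)]
            apply mul_le_mul_of_nonneg_left _ (hP H hH)
            rw [abs_mul]
            have hd : |f (insert a H) - f H| ≤ 1 := by
              have h1 := hf H; have h2 := hf (insert a H)
              rw [abs_sub_le_iff]
              constructor <;> nlinarith [h1.1, h1.2, h2.1, h2.2]
            nlinarith [abs_nonneg (w a - w' a)]
        _ = |w a - w' a| := by
            rw [← Finset.sum_mul, sum_prob_one, one_mul]
    calc |∑ H ∈ s.powerset, (∏ e ∈ H, w e) * (∏ e ∈ s \ H, (1 - w e)) * g H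
          - ∑ H ∈ s.powerset, (∏ e ∈ H, w' e) * (∏ e ∈ s \ H, (1 - w' e)) *
            ((1 - w' a) * f H + w' a * f (insert a H))|
        ≤ |∑ H ∈ s.powerset, (∏ e ∈ H, w e) * (∏ e ∈ s \ H, (1 - w e)) * g H
          - ∑ H ∈ s.powerset, (∏ e ∈ H, w' e) * (∏ e ∈ s \ H, (1 - w' e)) * g H|
        + |∑ H ∈ s.powerset, (∏ e ∈ H, w' e) * (∏ e ∈ s \ H, (1 - w' e)) * g H
          - ∑ H ∈ s.powerset, (∏ e ∈ H, w' e) * (∏ e ∈ s \ H, (1 - w' e)) *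
            ((1 - w' a) * f H + w' a * f (insert a H))| := abs_sub_le _ _ _
      _ ≤ (∑ e ∈ s, |w e - w' e|) + |w a - w' a| :=
          add_le_add (ih w w' hws hw's g hgI) hmid
      _ = ∑ e ∈ insert a s, |w e - w' e| := by
          rw [Finset.sum_insert ha]; ring

/-- The live-edge DIC influence is 1-Lipschitz in the edge weights w.r.t. the L1 norm. -/
theorem dic_influence_lipschitz (E : Finset (V × V)) (w w' : V × V → ℝ)
    (hw : ∀ e ∈ E, w e ∈ Set.Icc (0 : ℝ) 1) (hw' : ∀ e ∈ E, w' e ∈ Set.Icc (0 : ℝ) 1)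
    (S : Finset V) (u : V) :
    |dicInf E w S u - dicInf E w' S u| ≤ ∑ e ∈ E, |w e - w' e| := by
  have hf : ∀ H : Finset (V × V),
      (if dicReach H S u then (1:ℝ) else 0) ∈ Set.Icc (0:ℝ) 1 := by
    intro H
    by_cases h : dicReach H S u <;> simp [h]
  simpa [dicInf] using dic_key E w w' hw hw' (fun H => if dicReach H S u then (1:ℝ) else 0) hf
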